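/- For p ≥ 0, let y_{p,λ}(x,r) = ∑_{n=1}^∞ ( ∑_{j=0}^{n-1} (j+r)_{p,λ} ) x^n/n!. Then d/dx y_{p,λ}(x,r) = y_{p,λ}(x,r) + e^x φ_{p,λ}^{(r)}(x). -/

import Mathlib

set_option maxHeartbeats 1000000

/-- Generalized falling factorial `(y)_{m,λ} = y(y-λ)⋯(y-(m-1)λ)`. -/
noncomputable def degFallFact (y l : ℝ) (m : ℕ) : ℝ :=
  ∏ i ∈ Finset.range m, (y - i * l)

lemma aux_summable (q : ℕ) (C R : ℝ) (hC : 0 ≤ C) (hR : 0 ≤ R) :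
    Summable (fun n : ℕ => ((n:ℝ) + C) ^ q * R ^ n / n.factorial) := by
  set k := ⌈C⌉₊ with hk
  have base : Summable (fun n : ℕ => (n : ℝ) ^ q * (1 / 2 : ℝ) ^ n) := by
    simpa using summable_pow_mul_geometric_of_norm_lt_one (R := ℝ) q (r := (1/2:ℝ)) (by norm_num)
  have hshift : Summable (fun n : ℕ => ((n + k : ℕ) : ℝ) ^ q * (1 / 2 : ℝ) ^ (n + k)) :=
    (summable_nat_add_iff k).2 base
  have h2 : Summable (fun n : ℕ => ((n : ℝ) + k) ^ q * (1 / 2 : ℝ) ^ n) := by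
    have h3 := hshift.mul_left ((2 : ℝ) ^ k)
    refine h3.congr fun n => ?_
    push_cast
    rw [pow_add]
    have hone : (1 / 2 : ℝ) ^ k * (2 : ℝ) ^ k = 1 := by
      rw [← mul_pow]; norm_num
    calc (2:ℝ) ^ k * (((n:ℝ) + k) ^ q * ((1/2:ℝ) ^ n * (1/2:ℝ) ^ k))
        = ((1/2:ℝ) ^ k * (2:ℝ) ^ k) * (((n:ℝ) + k) ^ q * (1/2:ℝ) ^ n) := by ring
      _ = ((n:ℝ) + k) ^ q * (1/2:ℝ) ^ n := by rw [hone]; ring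
  apply Summable.of_nonneg_of_le (fun n => by positivity) ?_ (h2.mul_left (Real.exp (2 * R)))
  intro n
  have hCk : C ≤ k := Nat.le_ceil C
  have h1 : ((n:ℝ) + C) ^ q ≤ ((n : ℝ) + k) ^ q := by
    apply pow_le_pow_left₀ (by positivity) (by linarith)
  have h4 : (2 * R) ^ n / n.factorial ≤ Real.exp (2 * R) := by
    calc (2 * R) ^ n / (n.factorial : ℝ)
        ≤ ∑ i ∈ Finset.range (n + 1), (2 * R) ^ i / (i.factorial : ℝ) := by
          apply Finset.single_le_sum (f := fun i => (2 * R) ^ i / (i.factorial : ℝ))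
            (fun i _ => by positivity) (Finset.self_mem_range_succ n)
      _ ≤ Real.exp (2 * R) := Real.sum_le_exp_of_nonneg (by linarith) _
  have hRn : R ^ n = (2 * R) ^ n * (1 / 2 : ℝ) ^ n := by
    rw [← mul_pow]; ring_nf
  calc ((n:ℝ) + C) ^ q * R ^ n / n.factorial
      = ((2 * R) ^ n / n.factorial) * (((n:ℝ) + C) ^ q * (1 / 2 : ℝ) ^ n) := by
        rw [hRn]; ring
    _ ≤ Real.exp (2 * R) * (((n : ℝ) + k) ^ q * (1 / 2 : ℝ) ^ n) := by
        apply mul_le_mul h4 (mul_le_mul_of_nonneg_right h1 (by positivity)) (by positivity)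
          (Real.exp_nonneg _)

noncomputable def aF (l : ℝ) (p r : ℕ) (n : ℕ) : ℝ :=
  ∑ j ∈ Finset.range n, degFallFact (j + r) l p

theorem yFun_deriv' (l : ℝ) (p r : ℕ) (x : ℝ) :
    HasDerivAt (fun z : ℝ => ∑' n : ℕ, aF l p r n * z ^ n / n.factorial)
      ((∑' n : ℕ, aF l p r n * x ^ n / n.factorial) + Real.exp x *
        (Real.exp (-x) * ∑' k : ℕ, degFallFact (k + r) l p * x ^ k / k.factorial)) x := by
  set C : ℝ := r + p * |l| with hCdef
  have hC : 0 ≤ C := by positivity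
  set R : ℝ := |x| + 1 with hRdef
  have hR1 : 1 ≤ R := by rw [hRdef]; linarith [abs_nonneg x]
  have hR0 : 0 < R := by linarith
  -- bound on the falling factorial
  have hc : ∀ j : ℕ, |degFallFact (j + r) l p| ≤ ((j:ℝ) + C) ^ p := by
    intro j
    unfold degFallFact
    rw [Finset.abs_prod]
    calc (∏ i ∈ Finset.range p, |(j:ℝ) + r - i * l|)
        ≤ ∏ _i ∈ Finset.range p, ((j:ℝ) + C) := by
          apply Finset.prod_le_prod (fun i _ => abs_nonneg _)
          intro i hi
          have hip : (i:ℝ) ≤ p := by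
            exact_mod_cast (Finset.mem_range.1 hi).le
          have h1 : |(j:ℝ) + r - i * l| ≤ |(j:ℝ) + (r:ℝ)| + |(i:ℝ) * l| := by
            rw [sub_eq_add_neg]
            exact (abs_add_le _ _).trans (by rw [abs_neg])
          have h2 : |(j:ℝ) + (r:ℝ)| = (j:ℝ) + r := abs_of_nonneg (by positivity)
          have h3 : |(i:ℝ) * l| ≤ (p:ℝ) * |l| := by
            rw [abs_mul, Nat.abs_cast]
            exact mul_le_mul_of_nonneg_right hip (abs_nonneg l)
          rw [hCdef]; linarith
      _ = ((j:ℝ) + C) ^ p := by rw [Finset.prod_const, Finset.card_range]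
  -- bound on the partial sums
  have ha : ∀ n : ℕ, |aF l p r n| ≤ ((n:ℝ) + C) ^ (p + 1) := by
    intro n
    have hpos : (0:ℝ) ≤ ((n:ℝ) + C) ^ p := by positivity
    calc |aF l p r n| ≤ ∑ j ∈ Finset.range n, |degFallFact (j + r) l p| :=
          Finset.abs_sum_le_sum_abs _ _
      _ ≤ ∑ _j ∈ Finset.range n, ((n:ℝ) + C) ^ p := by
          apply Finset.sum_le_sum
          intro j hj
          refine (hc j).trans (pow_le_pow_left₀ (by positivity) ?_ p)
          have : (j:ℝ) ≤ n := by exact_mod_cast (Finset.mem_range.1 hj).le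
          linarith
      _ = (n:ℝ) * ((n:ℝ) + C) ^ p := by
          rw [Finset.sum_const, Finset.card_range, nsmul_eq_mul]
      _ ≤ ((n:ℝ) + C) ^ (p + 1) := by
          rw [pow_succ]
          nlinarith [Nat.cast_nonneg (α := ℝ) n]
  -- the series of derivatives and its summable bound
  set u : ℕ → ℝ := fun n => ((n:ℝ) + C) ^ (p + 2) * R ^ n / n.factorial with hu_def
  have hu : Summable u := aux_summable (p + 2) C R hC hR0.le
  have hbound : ∀ (n : ℕ), ∀ y ∈ Metric.ball (0:ℝ) R,
      ‖aF l p r n * ((n:ℝ) * y ^ (n - 1)) / n.factorial‖ ≤ u n := by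
    intro n y hy
    have hyR : |y| ≤ R := by
      have := Metric.mem_ball.1 hy
      rw [Real.dist_eq, sub_zero] at this
      linarith
    have hy0 : (0:ℝ) ≤ |y| := abs_nonneg y
    have e1 : ‖aF l p r n * ((n:ℝ) * y ^ (n - 1)) / n.factorial‖
        = |aF l p r n| * ((n:ℝ) * |y| ^ (n - 1)) / n.factorial := by
      simp [Real.norm_eq_abs, abs_mul, abs_div, abs_pow, Nat.abs_cast]
    rw [e1, hu_def]
    have step1 : |aF l p r n| * ((n:ℝ) * |y| ^ (n - 1)) / n.factorial
        ≤ ((n:ℝ) + C) ^ (p + 1) * ((n:ℝ) * R ^ (n - 1)) / n.factorial := by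
      gcongr
      exact ha n
    refine step1.trans ?_
    have step2 : (n:ℝ) * R ^ (n - 1) ≤ ((n:ℝ) + C) * R ^ n := by
      apply mul_le_mul (by linarith) (pow_le_pow_right₀ hR1 (Nat.sub_le n 1))
        (by positivity) (by positivity)
    calc ((n:ℝ) + C) ^ (p + 1) * ((n:ℝ) * R ^ (n - 1)) / n.factorial
        ≤ ((n:ℝ) + C) ^ (p + 1) * (((n:ℝ) + C) * R ^ n) / n.factorial := by
          gcongr
      _ = ((n:ℝ) + C) ^ (p + 2) * R ^ n / n.factorial := by
          rw [show p + 2 = (p + 1) + 1 from rfl, pow_succ]; ring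
  -- summability at the center
  have hg0 : Summable (fun n : ℕ => aF l p r n * (0:ℝ) ^ n / n.factorial) := by
    apply summable_of_ne_finset_zero (s := {0})
    intro n hn
    have : n ≠ 0 := by simpa using hn
    simp [zero_pow this]
  have hxmem : x ∈ Metric.ball (0:ℝ) R := by
    rw [Metric.mem_ball, Real.dist_eq, sub_zero]
    simp [hRdef]
  have key := hasDerivAt_tsum_of_isPreconnected hu Metric.isOpen_ball
    (convex_ball (0:ℝ) R).isPreconnected
    (g := fun n y => aF l p r n * y ^ n / n.factorial)
    (g' := fun n y => aF l p r n * ((n:ℝ) * y ^ (n - 1)) / n.factorial)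
    (fun n y _ => ((hasDerivAt_pow n y).const_mul (aF l p r n)).div_const _)
    hbound (Metric.mem_ball_self hR0) hg0 hxmem
  -- summability facts for rearranging the sum of derivatives
  have hs' : Summable (fun n : ℕ => aF l p r n * ((n:ℝ) * x ^ (n - 1)) / n.factorial) :=
    Summable.of_norm_bounded hu (fun n => hbound n x hxmem)
  have hA : Summable (fun n : ℕ => aF l p r n * x ^ n / n.factorial) := by
    apply Summable.of_norm_bounded (aux_summable (p + 1) C R hC hR0.le)
    intro n
    have e1 : ‖aF l p r n * x ^ n / n.factorial‖ = |aF l p r n| * |x| ^ n / n.factorial := by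
      simp [Real.norm_eq_abs, abs_mul, abs_div, abs_pow, Nat.abs_cast]
    rw [e1]
    gcongr
    · exact ha n
    · simp [hRdef]
  have hB : Summable (fun n : ℕ => degFallFact (n + r) l p * x ^ n / n.factorial) := by
    apply Summable.of_norm_bounded (aux_summable p C R hC hR0.le)
    intro n
    have e1 : ‖degFallFact (n + r) l p * x ^ n / n.factorial‖
        = |degFallFact (n + r) l p| * |x| ^ n / n.factorial := by
      simp [Real.norm_eq_abs, abs_mul, abs_div, abs_pow, Nat.abs_cast]
    rw [e1]
    gcongr
    · exact hc n
    · simp [hRdef]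
  -- compute the value of the derivative
  have hterm : ∀ n : ℕ,
      aF l p r (n + 1) * (((n:ℕ) + 1 : ℝ) * x ^ n) / (n + 1).factorial
        = aF l p r n * x ^ n / n.factorial + degFallFact (n + r) l p * x ^ n / n.factorial := by
    intro n
    have hfac : ((n + 1).factorial : ℝ) = ((n:ℝ) + 1) * n.factorial := by
      rw [Nat.factorial_succ]; push_cast; ring
    have hf0 : (n.factorial : ℝ) ≠ 0 := Nat.cast_ne_zero.2 n.factorial_ne_zero
    have hn0 : ((n:ℝ) + 1) ≠ 0 := by positivity
    have haS : aF l p r (n + 1) = aF l p r n + degFallFact (n + r) l p :=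
      Finset.sum_range_succ _ n
    rw [haS, hfac]
    field_simp
  have hval : (∑' n : ℕ, aF l p r n * ((n:ℝ) * x ^ (n - 1)) / n.factorial)
      = (∑' n : ℕ, aF l p r n * x ^ n / n.factorial)
        + ∑' n : ℕ, degFallFact (n + r) l p * x ^ n / n.factorial := by
    rw [Summable.tsum_eq_zero_add hs']
    have h0 : aF l p r 0 * (((0:ℕ):ℝ) * x ^ (0 - 1)) / (0).factorial = 0 := by simp
    rw [h0, zero_add]
    have hfun : (fun n : ℕ => aF l p r (n + 1) * (((n + 1 : ℕ):ℝ) * x ^ (n + 1 - 1)) / (n + 1).factorial)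
        = fun n : ℕ => aF l p r n * x ^ n / n.factorial
          + degFallFact (n + r) l p * x ^ n / n.factorial := by
      funext n
      have := hterm n
      push_cast at this ⊢
      simpa using this
    rw [hfun, Summable.tsum_add hA hB]
  have hexp : Real.exp x * (Real.exp (-x)
      * ∑' k : ℕ, degFallFact (k + r) l p * x ^ k / k.factorial)
      = ∑' n : ℕ, degFallFact (n + r) l p * x ^ n / n.factorial := by
    rw [← mul_assoc, ← Real.exp_add, add_neg_cancel, Real.exp_zero, one_mul]
  rw [hexp, ← hval]
  exact key

/-- `y_{p,λ}(x,r) = ∑_{n≥1} (∑_{j=0}^{n-1} (j+r)_{p,λ}) x^n/n!` (the `n = 0` term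
of the `tsum` vanishes since the inner sum is empty). -/
noncomputable def yFun (l : ℝ) (p r : ℕ) (x : ℝ) : ℝ :=
  ∑' n : ℕ, (∑ j ∈ Finset.range n, degFallFact (j + r) l p) * x ^ n / n.factorial

/-- `d/dx y_{p,λ}(x,r) = y_{p,λ}(x,r) + e^x φ_{p,λ}^{(r)}(x)`, where
`φ_{p,λ}^{(r)}(x) = e^{-x} ∑_{k≥0} (k+r)_{p,λ} x^k/k!` (Dobinski formula). -/
theorem yFun_deriv (l : ℝ) (p r : ℕ) (x : ℝ) :
    HasDerivAt (yFun l p r)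
      (yFun l p r x + Real.exp x *
        (Real.exp (-x) * ∑' k : ℕ, degFallFact (k + r) l p * x ^ k / k.factorial)) x := by
  exact yFun_deriv' l p r x
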